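/- In a sink parity game, there cannot exist a cycle avoiding the sink that is simultaneously consistent with an admissible player 0 strategy σ and an admissible player 1 strategy τ; equivalently, the play under any pair of admissible strategies never repeats a node other than ⊤. -/

import Mathlib

structure PGame (V : Type) where
  E : V → V → Prop
  isP0 : V → Bool
  p : V → ℤ

namespace PGame

variable {V : Type}

/-- A valid positional strategy for player 0: at every player-0 node it follows an edge. -/
def Strat0Valid (G : PGame V) (σ : V → V) : Prop := ∀ v, G.isP0 v = true → G.E v (σ v)

/-- A valid positional strategy for player 1. -/
def Strat1Valid (G : PGame V) (τ : V → V) : Prop := ∀ v, G.isP0 v = false → G.E v (τ v)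

/-- Edges of the subgraph where player 0 follows `σ` (player 1 keeps all edges). -/
def E0 (G : PGame V) (σ : V → V) (v w : V) : Prop :=
  if G.isP0 v then w = σ v else G.E v w

/-- Edges of the subgraph where player 1 follows `τ` (player 0 keeps all edges). -/
def E1 (G : PGame V) (τ : V → V) (v w : V) : Prop :=
  if G.isP0 v then G.E v w else w = τ v

/-- A cycle of length `k` (given by a `k`-periodic sequence) in the relation `R`. -/
def IsCycle (R : V → V → Prop) (k : ℕ) (c : ℕ → V) : Prop :=
  0 < k ∧ (∀ i, R (c i) (c (i + 1))) ∧ ∀ i, c (i + k) = c i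

/-- The highest priority occurring on the (periodic) cycle `c` is even. -/
def TopEven (G : PGame V) (c : ℕ → V) : Prop :=
  ∃ i, Even (G.p (c i)) ∧ ∀ j, G.p (c j) ≤ G.p (c i)

/-- The highest priority occurring on the (periodic) cycle `c` is odd. -/
def TopOdd (G : PGame V) (c : ℕ → V) : Prop :=
  ∃ i, Odd (G.p (c i)) ∧ ∀ j, G.p (c j) ≤ G.p (c i)

/-- `σ` is an admissible player 0 strategy: valid, and every cycle avoiding the sink
in the subgraph where player 0 follows `σ` has even highest priority. -/
def Admissible0 (G : PGame V) (top : V) (σ : V → V) : Prop :=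
  G.Strat0Valid σ ∧ ∀ k c, IsCycle (G.E0 σ) k c → (∀ i, c i ≠ top) → G.TopEven c

/-- `τ` is an admissible player 1 strategy. -/
def Admissible1 (G : PGame V) (top : V) (τ : V → V) : Prop :=
  G.Strat1Valid τ ∧ ∀ k c, IsCycle (G.E1 τ) k c → (∀ i, c i ≠ top) → G.TopOdd c

/-- `top` is a sink node: unique smallest priority and only the self-loop as outgoing edge. -/
def IsSink (G : PGame V) (top : V) : Prop :=
  (∀ v, v ≠ top → G.p top < G.p v) ∧ (∀ w, G.E top w ↔ w = top)

/-- A sink parity game. -/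
def IsSinkGame (G : PGame V) (top : V) : Prop :=
  G.IsSink top ∧ (∃ σ, G.Admissible0 top σ) ∧ (∃ τ, G.Admissible1 top τ)

/-- One move when both players play their positional strategies. -/
def step (G : PGame V) (σ τ : V → V) (v : V) : V := if G.isP0 v then σ v else τ v

/-- The play from `v` under the strategies `σ`, `τ`. -/
def play (G : PGame V) (σ τ : V → V) (v : V) (n : ℕ) : V := (G.step σ τ)^[n] v

end PGame

/-- Edges consistent with both strategies: at player 0 nodes the edge is `(v, σ v)`,
at player 1 nodes it is `(v, τ v)`. -/
def Eboth {V : Type} (G : PGame V) (σ τ : V → V) (v w : V) : Prop :=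
  G.E v w ∧ (G.isP0 v = true → w = σ v) ∧ (G.isP0 v = false → w = τ v)

/-- In a sink parity game there is no cycle avoiding the sink that is simultaneously
consistent with an admissible player 0 strategy `σ` and an admissible player 1 strategy `τ`;
equivalently, the play under `(σ, τ)` never repeats a node other than the sink. -/
theorem stmt2 {V : Type} (G : PGame V) (top : V) (hs : G.IsSink top)
    (σ τ : V → V) (hσ : G.Admissible0 top σ) (hτ : G.Admissible1 top τ) :
    (¬ ∃ k c, PGame.IsCycle (Eboth G σ τ) k c ∧ ∀ i, c i ≠ top) ∧
    (∀ v m n, m < n → G.play σ τ v m = G.play σ τ v n → G.play σ τ v m = top) := by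

  obtain ⟨hσv, hσc⟩ := hσ
  obtain ⟨hτv, hτc⟩ := hτ
  have key : ¬ ∃ k c, PGame.IsCycle (Eboth G σ τ) k c ∧ ∀ i, c i ≠ top := by
    rintro ⟨k, c, ⟨hk, hE, hper⟩, hnt⟩
    have h0 : PGame.IsCycle (G.E0 σ) k c := by
      refine ⟨hk, fun i => ?_, hper⟩
      obtain ⟨he, h1, h2⟩ := hE i
      unfold PGame.E0
      cases h : G.isP0 (c i) with
      | true => simp [h]; exact h1 h
      | false => simp [h]; exact he
    have h1 : PGame.IsCycle (G.E1 τ) k c := by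
      refine ⟨hk, fun i => ?_, hper⟩
      obtain ⟨he, h1, h2⟩ := hE i
      unfold PGame.E1
      cases h : G.isP0 (c i) with
      | true => simp [h]; exact he
      | false => simp [h]; exact h2 h
    obtain ⟨i, hei, hmi⟩ := hσc k c h0 hnt
    obtain ⟨j, hoj, hmj⟩ := hτc k c h1 hnt
    have : G.p (c i) = G.p (c j) := le_antisymm (hmj i) (hmi j)
    rw [this] at hei
    exact (Int.not_odd_iff_even.mpr hei) hoj
  refine ⟨key, fun v m n hmn heq => ?_⟩
  by_contra hne
  set k := n - m with hkdef
  have hk : 0 < k := Nat.sub_pos_of_lt hmn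
  set c : ℕ → V := fun i => G.play σ τ v (m + i) with hc
  have hstep : ∀ i, c (i + 1) = G.step σ τ (c i) := by
    intro i
    show G.play σ τ v (m + (i + 1)) = G.step σ τ (G.play σ τ v (m + i))
    have : m + (i + 1) = (m + i) + 1 := by ring
    rw [this]
    exact Function.iterate_succ_apply' _ _ _
  have hper : ∀ i, c (i + k) = c i := by
    intro i
    show G.play σ τ v (m + (i + k)) = G.play σ τ v (m + i)
    have h1 : m + (i + k) = i + n := by omega
    have h2 : m + i = i + m := by omega
    rw [h1, h2]
    show (G.step σ τ)^[i + n] v = (G.step σ τ)^[i + m] v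
    rw [Function.iterate_add_apply, Function.iterate_add_apply]
    exact congrArg _ heq.symm
  have steptop : G.step σ τ top = top := by
    unfold PGame.step
    cases h : G.isP0 top with
    | true => simpa using (hs.2 (σ top)).mp (hσv top h)
    | false => simpa using (hs.2 (τ top)).mp (hτv top h)
  have hnt : ∀ i, c i ≠ top := by
    intro i hi
    have habs : ∀ t, c (i + t) = top := by
      intro t
      induction t with
      | zero => exact hi
      | succ t ih =>
        have : i + (t + 1) = (i + t) + 1 := by ring
        rw [this, hstep, ih, steptop]
    have hmul : ∀ N, c (N * k) = c 0 := by
      intro N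
      induction N with
      | zero => simp
      | succ N ih => rw [Nat.succ_mul, hper, ih]
    have hik : i ≤ i * k := Nat.le_mul_of_pos_right i hk
    have : c 0 = top := by
      rw [← hmul i]
      have : i * k = i + (i * k - i) := by omega
      rw [this]
      exact habs _
    exact hne (by simpa [hc] using this)
  apply key
  refine ⟨k, c, ⟨hk, fun i => ?_, hper⟩, hnt⟩
  rw [hstep]
  unfold PGame.step
  cases h : G.isP0 (c i) with
  | true => exact ⟨by simpa [h] using hσv (c i) h, by simp [h], by simp [h]⟩
  | false => exact ⟨by simpa [h] using hτv (c i) h, by simp [h], by simp [h]⟩
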